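/- Let n ≥ 3 and let G be a non-bipartite simple graph on n vertices with e(G) ≥ ⌊(n−1)²/4⌋ + 2. Then G contains a triangle; equivalently, a shortest odd cycle of G has length 3. -/

import Mathlib

open SimpleGraph Set

lemma exists_odd_closed_walk' {V : Type*} (G : SimpleGraph V) (hnb : ¬ G.Colorable 2) :
    ∃ (u : V) (p : G.Walk u u), Odd p.length := by
  classical
  by_contra h
  push_neg at h
  apply hnb
  have hcol : ∀ v, G.Reachable ((G.connectedComponentMk v).out) v := by
    intro v
    exact ConnectedComponent.exact (Quot.out_eq _)
  set root : V → V := fun v => (G.connectedComponentMk v).out with hrootdef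
  have key : G.Coloring Bool := by
    refine Coloring.mk (fun v => decide (∃ p : G.Walk (root v) v, Odd p.length)) ?_
    intro u v hadj
    have hr : root u = root v := by
      exact congrArg Quot.out (ConnectedComponent.sound hadj.reachable)
    intro hiff
    rw [decide_eq_decide] at hiff
    by_cases hu : ∃ p : G.Walk (root u) u, Odd p.length
    · obtain ⟨p, hp⟩ := hu
      obtain ⟨q, hq⟩ := hiff.mp ⟨p, hp⟩
      refine h (root u) (p.append ((hadj.toWalk).append (q.copy hr.symm rfl).reverse)) ?_
      simp only [Walk.length_append, Walk.length_reverse, Walk.length_copy, Adj.toWalk,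
        Walk.length_cons, Walk.length_nil]
      rw [Nat.odd_iff] at hp hq ⊢
      omega
    · have hv : ¬ ∃ p : G.Walk (root v) v, Odd p.length := fun hv => hu (hiff.mpr hv)
      obtain ⟨p⟩ := hcol u
      obtain ⟨q⟩ := hcol v
      have hp : ¬ Odd p.length := fun hp => hu ⟨p, hp⟩
      have hq : ¬ Odd q.length := fun hq => hv ⟨q, hq⟩
      refine h (root u) (p.append ((hadj.toWalk).append (q.copy hr.symm rfl).reverse)) ?_
      simp only [Walk.length_append, Walk.length_reverse, Walk.length_copy, Adj.toWalk,
        Walk.length_cons, Walk.length_nil]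
      rw [Nat.odd_iff] at hp hq ⊢
      omega
  exact ⟨G.recolorOfEquiv finTwoEquiv.symm key⟩

lemma chainWalk' {V : Type*} {G : SimpleGraph V} (f : ℕ → V) (L : ℕ)
    (hadj : ∀ i, i < L → G.Adj (f i) (f (i+1))) :
    ∀ j, j ≤ L → ∀ i, i ≤ j → ∃ w : G.Walk (f i) (f j), w.length = j - i := by
  intro j
  induction j with
  | zero =>
    intro _ i hi
    obtain rfl : i = 0 := Nat.le_zero.mp hi
    exact ⟨Walk.nil, rfl⟩
  | succ j ih =>
    intro hj i hi
    rcases Nat.lt_or_ge i (j+1) with h | h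
    · obtain ⟨w, hw⟩ := ih (by omega) i (by omega)
      exact ⟨w.append (hadj j (by omega)).toWalk, by
        simp [Walk.length_append, hw]; omega⟩
    · obtain rfl : i = j + 1 := by omega
      exact ⟨Walk.nil, by simp⟩

set_option maxHeartbeats 1000000 in
theorem stmt_12 (n : ℕ) (hn : 3 ≤ n) (G : SimpleGraph (Fin n))
    (hnb : ¬ G.Colorable 2) (he : (n - 1) ^ 2 / 4 + 2 ≤ G.edgeSet.ncard) :
    ∃ w1 w2 w3 : Fin n, G.Adj w1 w2 ∧ G.Adj w2 w3 ∧ G.Adj w3 w1 := by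
  classical
  by_contra hno
  push_neg at hno
  -- hno : ∀ w1 w2 w3, Adj w1 w2 → Adj w2 w3 → ¬ Adj w3 w1
  obtain ⟨u0, p0, hp0⟩ := exists_odd_closed_walk' G hnb
  have hex : ∃ L, (∃ (u : Fin n) (p : G.Walk u u), p.length = L) ∧ L % 2 = 1 :=
    ⟨p0.length, ⟨u0, p0, rfl⟩, Nat.odd_iff.mp hp0⟩
  set ℓ := Nat.find hex with hldef
  obtain ⟨⟨u, p, hp⟩, hlodd⟩ := Nat.find_spec hex
  rw [← hldef] at hp hlodd
  have hmin : ∀ (v : Fin n) (q : G.Walk v v), q.length % 2 = 1 → ℓ ≤ q.length :=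
    fun v q hq => Nat.find_min' hex ⟨⟨v, q, rfl⟩, hq⟩
  set f : ℕ → Fin n := p.getVert with hfdef
  have hf0 : f 0 = u := p.getVert_zero
  have hfl : f ℓ = u := by rw [← hp]; exact p.getVert_length
  have hadjf : ∀ i, i < ℓ → G.Adj (f i) (f (i+1)) :=
    fun i hi => p.adj_getVert_succ (by omega)
  -- ℓ ≥ 5
  have hl1 : ℓ ≠ 1 := by
    intro h1
    have := hadjf 0 (by omega)
    rw [hf0, show (0:ℕ)+1 = ℓ by omega, hfl] at this
    exact G.irrefl this
  have hl3 : ℓ ≠ 3 := by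
    intro h3
    refine hno u (f 1) (f 2) ?_ ?_ ?_
    · have := hadjf 0 (by omega); rwa [hf0] at this
    · exact hadjf 1 (by omega)
    · have := hadjf 2 (by omega)
      rwa [show (2:ℕ)+1 = ℓ by omega, hfl] at this
  have hl5 : 5 ≤ ℓ := by omega
  -- closed walk builders
  have cw2 : ∀ i j, i ≤ j → j ≤ ℓ → ∃ w : G.Walk (f j) (f i), w.length = (ℓ - j) + i := by
    intro i j hij hj
    obtain ⟨w1, hw1⟩ := chainWalk' f ℓ hadjf ℓ le_rfl j hj
    obtain ⟨w2, hw2⟩ := chainWalk' f ℓ hadjf i (le_trans hij hj) 0 (Nat.zero_le _)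
    refine ⟨(w1.copy rfl hfl).append (w2.copy hf0 rfl), ?_⟩
    simp [Walk.length_append, hw1, hw2]
  -- Fact A : injectivity
  have hinj : ∀ i j, i < j → j ≤ ℓ → ¬(i = 0 ∧ j = ℓ) → f i ≠ f j := by
    intro i j hij hj hne heq
    obtain ⟨w1, hw1⟩ := chainWalk' f ℓ hadjf j hj i hij.le
    obtain ⟨w2, hw2⟩ := cw2 i j hij.le hj
    have hpar : (j - i) % 2 = 1 ∨ ((ℓ - j) + i) % 2 = 1 := by omega
    rcases hpar with h | h
    · have := hmin (f i) (w1.copy rfl heq.symm) (by rwa [Walk.length_copy, hw1])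
      rw [Walk.length_copy, hw1] at this
      omega
    · have := hmin (f j) (w2.copy rfl heq) (by rwa [Walk.length_copy, hw2])
      rw [Walk.length_copy, hw2] at this
      omega
  -- Fact B : no chords
  have hchord : ∀ i j, i < j → j ≤ ℓ → G.Adj (f i) (f j) → j = i + 1 ∨ j = i + (ℓ - 1) := by
    intro i j hij hj hadj
    obtain ⟨w1, hw1⟩ := chainWalk' f ℓ hadjf j hj i hij.le
    obtain ⟨w2, hw2⟩ := cw2 i j hij.le hj
    have hne : ¬(i = 0 ∧ j = ℓ) := by
      rintro ⟨rfl, rfl⟩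
      rw [hf0, hfl] at hadj
      exact G.irrefl hadj
    have hpar : ((j - i) + 1) % 2 = 1 ∨ (((ℓ - j) + i) + 1) % 2 = 1 := by omega
    rcases hpar with h | h
    · have := hmin (f i) (w1.append hadj.symm.toWalk)
        (by simp [Walk.length_append, hw1]; omega)
      simp [Walk.length_append, hw1] at this
      omega
    · have := hmin (f j) (w2.append hadj.toWalk)
        (by simp [Walk.length_append, hw2]; omega)
      simp [Walk.length_append, hw2] at this
      omega
  -- Fact C : neighbours on the cycle
  have hnbr : ∀ (v : Fin n) a b, a < b → b < ℓ → G.Adj v (f a) → G.Adj v (f b) →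
      b = a + 2 ∨ b = a + (ℓ - 2) := by
    intro v a b hab hb hva hvb
    have hne1 : b ≠ a + 1 := by
      intro h
      exact hno v (f a) (f b) hva (h ▸ hadjf a (by omega)) hvb.symm
    obtain ⟨w1, hw1⟩ := chainWalk' f ℓ hadjf b hb.le a hab.le
    obtain ⟨w2, hw2⟩ := cw2 a b hab.le hb.le
    have hpar : ((b - a) + 2) % 2 = 1 ∨ (((ℓ - b) + a) + 2) % 2 = 1 := by omega
    rcases hpar with h | h
    · have := hmin (f a) (w1.append ((hvb.symm.toWalk).append hva.toWalk))
        (by simp [Walk.length_append, hw1]; omega)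
      simp [Walk.length_append, hw1] at this
      omega
    · have := hmin (f b) (w2.append ((hva.symm.toWalk).append hvb.toWalk))
        (by simp [Walk.length_append, hw2]; omega)
      simp [Walk.length_append, hw2] at this
      omega
  have hcard2 : ∀ v : Fin n, ((Finset.range ℓ).filter (fun i => G.Adj v (f i))).card ≤ 2 := by
    intro v
    by_contra hc
    push_neg at hc
    obtain ⟨a, b, c, ha, hb, hc', hab, hac, hbc⟩ := Finset.two_lt_card_iff.mp hc
    simp only [Finset.mem_filter, Finset.mem_range] at ha hb hc'
    have key : ∀ x y, x < ℓ → y < ℓ → G.Adj v (f x) → G.Adj v (f y) → x ≠ y →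
        (y = x + 2 ∨ y = x + (ℓ - 2) ∨ x = y + 2 ∨ x = y + (ℓ - 2)) := by
      intro x y hx hy hvx hvy hxy
      rcases Nat.lt_trichotomy x y with h | h | h
      · rcases hnbr v x y h hy hvx hvy with h' | h' <;> tauto
      · exact absurd h hxy
      · rcases hnbr v y x h hx hvy hvx with h' | h' <;> tauto
    have p1 := key a b ha.1 hb.1 ha.2 hb.2 hab
    have p2 := key a c ha.1 hc'.1 ha.2 hc'.2 hac
    have p3 := key b c hb.1 hc'.1 hb.2 hc'.2 hbc
    omega
  -- vertex sets
  set S : Finset (Fin n) := (Finset.range ℓ).image f with hSdef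
  have hinjOn : Set.InjOn f (Finset.range ℓ) := by
    intro i hi j hj hij
    simp only [Finset.coe_range, Set.mem_Iio] at hi hj
    rcases Nat.lt_trichotomy i j with h | h | h
    · exact absurd hij (hinj i j h (by omega) (by omega))
    · exact h
    · exact absurd hij.symm (hinj j i h (by omega) (by omega))
  have hScard : S.card = ℓ := by
    rw [hSdef, Finset.card_image_of_injOn hinjOn, Finset.card_range]
  have hlen : ℓ ≤ n := by
    calc ℓ = S.card := hScard.symm
    _ ≤ (Finset.univ : Finset (Fin n)).card := Finset.card_le_univ S
    _ = n := by simp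
  set m := n - ℓ with hmdef
  set T : Finset (Fin n) := Sᶜ with hTdef
  have hTmem : ∀ x : Fin n, x ∈ T ↔ x ∉ S := by
    intro x; rw [hTdef, Finset.mem_compl]
  have hTcard : T.card = m := by
    rw [hTdef, Finset.card_compl, hScard, hmdef]
    simp
  -- pairs
  set P : Finset (Fin n × Fin n) := Finset.univ.filter (fun z => G.Adj z.1 z.2) with hPdef
  have h2e : 2 * G.edgeFinset.card = P.card := by
    have h := two_mul_card_edgeFinset (G := G)
    rw [h]
  have hne : G.edgeSet.ncard = G.edgeFinset.card := by
    rw [Set.ncard_eq_toFinset_card']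
    congr 1
  -- both ends on the cycle
  have hA1 : (P.filter (fun z => z.1 ∈ S ∧ z.2 ∈ S)).card ≤ 2 * ℓ := by
    have hsurj : Set.SurjOn (fun ib : ℕ × Bool => if ib.2 then (f ib.1, f ((ib.1+1) % ℓ))
        else (f ((ib.1+1) % ℓ), f ib.1)) ↑((Finset.range ℓ) ×ˢ (Finset.univ : Finset Bool))
        ↑(P.filter (fun z => z.1 ∈ S ∧ z.2 ∈ S)) := by
      rintro ⟨x, y⟩ hz
      simp only [Finset.coe_filter, Set.mem_setOf_eq, hPdef, Finset.mem_filter,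
        Finset.mem_univ, true_and] at hz
      obtain ⟨hadj, h1, h2⟩ := hz
      rw [hSdef, Finset.mem_image] at h1 h2
      obtain ⟨i, hi, hfi⟩ := h1
      obtain ⟨j, hj, hfj⟩ := h2
      rw [Finset.mem_range] at hi hj
      subst hfi hfj
      rcases Nat.lt_trichotomy i j with h | h | h
      · rcases hchord i j h (by omega) hadj with h' | h'
        · refine ⟨(i, true), by simp [Finset.mem_product, hi], ?_⟩
          simp only [if_pos]
          rw [Nat.mod_eq_of_lt (by omega)]
          rw [h']
        · have hi0 : i = 0 ∧ j = ℓ - 1 := by omega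
          refine ⟨(ℓ-1, false), by simp [Finset.mem_product]; omega, ?_⟩
          simp only [Bool.false_eq_true, if_neg, ite_false]
          rw [show ℓ - 1 + 1 = ℓ by omega, Nat.mod_self, hi0.1, hi0.2]
      · exfalso
        exact G.ne_of_adj hadj (by rw [h])
      · rcases hchord j i h (by omega) hadj.symm with h' | h'
        · refine ⟨(j, false), by simp [Finset.mem_product]; omega, ?_⟩
          simp only [Bool.false_eq_true, if_neg, ite_false]
          rw [Nat.mod_eq_of_lt (by omega)]
          rw [h']
        · have hj0 : j = 0 ∧ i = ℓ - 1 := by omega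
          refine ⟨(ℓ-1, true), by simp [Finset.mem_product]; omega, ?_⟩
          simp only [if_pos]
          rw [show ℓ - 1 + 1 = ℓ by omega, Nat.mod_self, hj0.1, hj0.2]
    refine le_trans (Finset.card_le_card_of_surjOn _ hsurj) ?_
    rw [Finset.card_product, Finset.card_range]
    simp [mul_comm]
  -- crossing bound
  have hcross : ((T ×ˢ S).filter (fun z => G.Adj z.1 z.2)).card ≤ 2 * m := by
    have h1 : ((T ×ˢ S).filter (fun z => G.Adj z.1 z.2)).card
        = ∑ v ∈ T, (S.filter (fun w => G.Adj v w)).card := by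
      rw [Finset.card_filter, Finset.sum_product]
      exact Finset.sum_congr rfl fun v _ => (Finset.card_filter _ _).symm
    rw [h1]
    calc ∑ v ∈ T, (S.filter (fun w => G.Adj v w)).card ≤ ∑ _v ∈ T, 2 := by
          refine Finset.sum_le_sum fun v _ => ?_
          have hsub : S.filter (fun w => G.Adj v w) ⊆
              ((Finset.range ℓ).filter (fun i => G.Adj v (f i))).image f := by
            intro x hx
            simp only [Finset.mem_filter, hSdef, Finset.mem_image] at hx ⊢
            obtain ⟨⟨i, hi, rfl⟩, hadj⟩ := hx
            exact ⟨i, ⟨hi, hadj⟩, rfl⟩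
          exact le_trans (Finset.card_le_card hsub)
            (le_trans Finset.card_image_le (hcard2 v))
    _ = 2 * m := by rw [Finset.sum_const, smul_eq_mul, hTcard, mul_comm]
  have hP21 : (P.filter (fun z => z.1 ∉ S ∧ z.2 ∈ S)).card ≤ 2 * m := by
    refine le_trans (Finset.card_le_card ?_) hcross
    intro z hz
    simp only [hPdef, Finset.mem_filter, Finset.mem_univ, true_and, Finset.mem_product,
      hTdef, Finset.mem_compl] at hz ⊢
    tauto
  have hP12 : (P.filter (fun z => z.1 ∈ S ∧ z.2 ∉ S)).card ≤ 2 * m := by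
    refine le_trans (Finset.card_le_card_of_surjOn Prod.swap ?_) hcross
    rintro ⟨x, y⟩ hz
    simp only [Finset.coe_filter, Set.mem_setOf_eq, hPdef, Finset.mem_filter,
      Finset.mem_univ, true_and] at hz
    refine ⟨(y, x), ?_, rfl⟩
    simp only [Finset.coe_filter, Set.mem_setOf_eq, Finset.mem_product, hTdef,
      Finset.mem_compl]
    exact ⟨⟨hz.2.2, hz.2.1⟩, hz.1.symm⟩
  -- Mantel part
  set Q : Finset (Fin n × Fin n) := (T ×ˢ T).filter (fun z => G.Adj z.1 z.2) with hQdef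
  set k := Q.card with hkdef
  set d : Fin n → ℕ := fun v => (T.filter (fun w => G.Adj v w)).card with hddef
  have hP22 : (P.filter (fun z => z.1 ∉ S ∧ z.2 ∉ S)).card ≤ k := by
    refine Finset.card_le_card ?_
    intro z hz
    simp only [hPdef, hQdef, Finset.mem_filter, Finset.mem_univ, true_and,
      Finset.mem_product, hTdef, Finset.mem_compl] at hz ⊢
    tauto
  have hkT : k = ∑ v ∈ T, d v := by
    rw [hkdef, hQdef, Finset.card_filter, Finset.sum_product]
    exact Finset.sum_congr rfl fun v _ => (Finset.card_filter _ _).symm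
  have hdeg : ∀ x y, G.Adj x y → d x + d y ≤ m := by
    intro x y hxy
    have hdisj : Disjoint (T.filter (fun w => G.Adj x w)) (T.filter (fun w => G.Adj y w)) := by
      rw [Finset.disjoint_left]
      intro z hz1 hz2
      simp only [Finset.mem_filter] at hz1 hz2
      exact hno x y z hxy hz2.2 hz1.2.symm
    calc d x + d y = ((T.filter (fun w => G.Adj x w)) ∪ (T.filter (fun w => G.Adj y w))).card :=
          (Finset.card_union_of_disjoint hdisj).symm
    _ ≤ T.card := Finset.card_le_card
          (Finset.union_subset (Finset.filter_subset _ _) (Finset.filter_subset _ _))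
    _ = m := hTcard
  have hsum1 : ∑ z ∈ Q, d z.1 = ∑ v ∈ T, d v * d v := by
    rw [hQdef, Finset.sum_filter, Finset.sum_product]
    refine Finset.sum_congr rfl fun v _ => ?_
    rw [← Finset.sum_filter]
    show (∑ _a ∈ Finset.filter (fun w => G.Adj v w) T, d v) = d v * d v
    rw [Finset.sum_const, smul_eq_mul, mul_comm]
  have hsum2 : ∑ z ∈ Q, d z.2 = ∑ v ∈ T, d v * d v := by
    rw [← hsum1]
    refine Finset.sum_nbij' (i := Prod.swap) (j := Prod.swap) ?_ ?_ ?_ ?_ ?_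
    · rintro ⟨x, y⟩ hz
      simp only [hQdef, Finset.mem_filter, Finset.mem_product] at hz ⊢
      exact ⟨⟨hz.1.2, hz.1.1⟩, hz.2.symm⟩
    · rintro ⟨x, y⟩ hz
      simp only [hQdef, Finset.mem_filter, Finset.mem_product] at hz ⊢
      exact ⟨⟨hz.1.2, hz.1.1⟩, hz.2.symm⟩
    · rintro ⟨x, y⟩ _; rfl
    · rintro ⟨x, y⟩ _; rfl
    · rintro ⟨x, y⟩ _; rfl
  have hQm : 2 * (∑ v ∈ T, d v * d v) ≤ k * m := by
    calc 2 * (∑ v ∈ T, d v * d v) = ∑ z ∈ Q, (d z.1 + d z.2) := by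
          rw [Finset.sum_add_distrib, hsum1, hsum2]; ring
    _ ≤ ∑ _z ∈ Q, m := by
          refine Finset.sum_le_sum fun z hz => ?_
          simp only [hQdef, Finset.mem_filter] at hz
          exact hdeg z.1 z.2 hz.2
    _ = k * m := by rw [Finset.sum_const, smul_eq_mul, hkdef]
  have hkm : 2 * k ≤ m * m := by
    rcases Nat.eq_zero_or_pos k with h0 | hpos
    · simp [h0]
    · have hcs : ((k : ℤ))^2 ≤ (m : ℤ) * ∑ v ∈ T, (d v : ℤ)^2 := by
        have h := sq_sum_le_card_mul_sum_sq (s := T) (f := fun v => ((d v : ℤ)))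
        rw [hTcard] at h
        calc ((k : ℤ))^2 = (∑ v ∈ T, (d v : ℤ))^2 := by rw [hkT]; push_cast; ring
        _ ≤ (m : ℤ) * ∑ v ∈ T, (d v : ℤ)^2 := h
      have hQm' : 2 * (∑ v ∈ T, (d v : ℤ)^2) ≤ (k : ℤ) * m := by
        have h := hQm
        zify at h
        simpa [pow_two] using h
      have hfin : 2 * (k : ℤ) * k ≤ ((m : ℤ) * m) * k := by nlinarith
      have : 2 * (k : ℤ) ≤ (m : ℤ) * m := by
        have hk0 : (0 : ℤ) < k := by exact_mod_cast hpos
        have := mul_le_mul_iff_of_pos_right hk0 |>.mp (by linarith : (2 * (k:ℤ)) * k ≤ ((m:ℤ) * m) * k)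
        linarith
      exact_mod_cast this
  -- assemble
  have hsplit : P.card ≤ 2*ℓ + 2*m + 2*m + k := by
    have hsub : P ⊆ ((P.filter (fun z => z.1 ∈ S ∧ z.2 ∈ S))
        ∪ (P.filter (fun z => z.1 ∈ S ∧ z.2 ∉ S)))
        ∪ ((P.filter (fun z => z.1 ∉ S ∧ z.2 ∈ S))
        ∪ (P.filter (fun z => z.1 ∉ S ∧ z.2 ∉ S))) := by
      intro z hz
      by_cases h1 : z.1 ∈ S <;> by_cases h2 : z.2 ∈ S <;>
        simp [Finset.mem_union, Finset.mem_filter, hz, h1, h2]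
    refine le_trans (Finset.card_le_card hsub) ?_
    refine le_trans (Finset.card_union_le _ _) ?_
    have b1 := le_trans (Finset.card_union_le _ _) (add_le_add hA1 hP12)
    have b2 := le_trans (Finset.card_union_le _ _) (add_le_add hP21 hP22)
    omega
  -- final arithmetic
  rw [hne] at he
  obtain ⟨X, hX⟩ : ∃ X, (n-1)^2 = X := ⟨_, rfl⟩
  obtain ⟨Y, hY⟩ : ∃ Y, m * m = Y := ⟨_, rfl⟩
  have hquad : Y + 4*(ℓ-5) + 8*m + 16 ≤ X := by
    rw [← hX, ← hY]
    have hn1 : n - 1 = (ℓ-5) + m + 4 := by omega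
    rw [hn1]
    nlinarith [Nat.zero_le ((ℓ-5) * (ℓ-5)), Nat.zero_le ((ℓ-5) * m)]
  rw [hX] at he
  rw [hY] at hkm
  omega
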